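/- If S is a GCD-closed set of 8 distinct positive integers whose LCM matrix [S] is singular, then the poset (S, |) is isomorphic to the Boolean lattice of subsets of a 3-element set (the cube semilattice). -/

import Mathlib

open scoped Classical

noncomputable def psiF (S : Finset ℕ) (n : ℕ) : ℚ :=
  1 / n - ∑ y ∈ (S.filter (fun y => y ∣ n ∧ y < n)).attach, psiF S y.1
termination_by n
decreasing_by exact (Finset.mem_filter.mp y.2).2.2

lemma psiF_sum (S : Finset ℕ) (h0 : 0 ∉ S) {m : ℕ} (hm : m ∈ S) :
    ∑ y ∈ S.filter (fun y => y ∣ m), psiF S y = 1 / m := by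
  have hm0 : m ≠ 0 := fun h => h0 (h ▸ hm)
  have hsplit : S.filter (fun y => y ∣ m) =
      insert m (S.filter (fun y => y ∣ m ∧ y < m)) := by
    ext y
    simp only [Finset.mem_insert, Finset.mem_filter]
    constructor
    · rintro ⟨hy, hd⟩
      rcases eq_or_ne y m with rfl | hne
      · exact Or.inl rfl
      · exact Or.inr ⟨hy, hd, lt_of_le_of_ne (Nat.le_of_dvd (Nat.pos_of_ne_zero hm0) hd) hne⟩
    · rintro (rfl | ⟨hy, hd, _⟩)
      · exact ⟨hm, dvd_rfl⟩
      · exact ⟨hy, hd⟩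
  rw [hsplit, Finset.sum_insert (by simp)]
  rw [psiF]
  rw [Finset.sum_attach]
  ring

open Matrix

lemma exists_psi_zero (S : Finset ℕ) (h0 : 0 ∉ S)
    (hg : ∀ a ∈ S, ∀ b ∈ S, Nat.gcd a b ∈ S)
    (hsing : (Matrix.of fun a b : {x // x ∈ S} => (Nat.lcm a.1 b.1 : ℚ)).det = 0) :
    ∃ w ∈ S, psiF S w = 0 := by
  set ι := {x // x ∈ S}
  have hne : ∀ a : ι, (a.1 : ℕ) ≠ 0 := fun a h => h0 (h ▸ a.2)
  set B : Matrix ι ι ℚ := Matrix.of fun a z => (a.1 : ℚ) * (if z.1 ∣ a.1 then 1 else 0) with hB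
  set D : Matrix ι ι ℚ := Matrix.diagonal (fun z => psiF S z.1) with hD
  have key : (Matrix.of fun a b : ι => (Nat.lcm a.1 b.1 : ℚ)) = B * D * B.transpose := by
    ext a b
    have h1 : (B * D * B.transpose) a b
        = ∑ z : ι, (a.1 : ℚ) * (b.1 : ℚ) * ((if z.1 ∣ a.1 ∧ z.1 ∣ b.1 then 1 else 0) * psiF S z.1) := by
      rw [Matrix.mul_apply]
      congr 1; ext z
      rw [Matrix.mul_apply, Finset.sum_eq_single z]
      · simp only [hB, hD, Matrix.diagonal_apply_eq, Matrix.of_apply, Matrix.transpose_apply]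
        by_cases h1 : z.1 ∣ a.1 <;> by_cases h2 : z.1 ∣ b.1 <;> simp [h1, h2] <;> ring
      · intro c _ hc
        simp [hD, Matrix.diagonal_apply_ne _ hc]
      · simp
    have h2 : ∑ z : ι, ((if z.1 ∣ a.1 ∧ z.1 ∣ b.1 then 1 else 0) * psiF S z.1)
        = (1 : ℚ) / (Nat.gcd a.1 b.1) := by
      have hiff : ∀ z : ι, (z.1 ∣ a.1 ∧ z.1 ∣ b.1) ↔ z.1 ∣ Nat.gcd a.1 b.1 := by
        intro z; exact Nat.dvd_gcd_iff.symm
      calc ∑ z : ι, ((if z.1 ∣ a.1 ∧ z.1 ∣ b.1 then 1 else 0) * psiF S z.1)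
          = ∑ z : ι, (if z.1 ∣ Nat.gcd a.1 b.1 then psiF S z.1 else 0) := by
            apply Finset.sum_congr rfl; intro z _
            by_cases h : z.1 ∣ a.1 ∧ z.1 ∣ b.1
            · rw [if_pos h, if_pos ((hiff z).mp h)]; ring
            · rw [if_neg h, if_neg (fun hh => h ((hiff z).mpr hh))]; ring
        _ = ∑ y ∈ S, (if y ∣ Nat.gcd a.1 b.1 then psiF S y else 0) :=
            Finset.sum_coe_sort S (fun y => if y ∣ Nat.gcd a.1 b.1 then psiF S y else 0)
        _ = ∑ y ∈ S.filter (fun y => y ∣ Nat.gcd a.1 b.1), psiF S y := by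
            rw [Finset.sum_filter]
        _ = 1 / (Nat.gcd a.1 b.1) := psiF_sum S h0 (hg a.1 a.2 b.1 b.2)
    rw [h1, ← Finset.mul_sum, h2]
    have hgcd0 : (Nat.gcd a.1 b.1 : ℚ) ≠ 0 := by
      have := Nat.gcd_ne_zero_left (m := a.1) (n := b.1) (hne a)
      exact_mod_cast this
    have hlcm : (Nat.gcd a.1 b.1 : ℚ) * (Nat.lcm a.1 b.1 : ℚ) = (a.1 : ℚ) * (b.1 : ℚ) := by
      have := Nat.gcd_mul_lcm a.1 b.1
      exact_mod_cast this
    simp only [Matrix.of_apply]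
    field_simp
    linarith [hlcm]
  -- B is invertible
  have hBdet : B.det ≠ 0 := by
    intro hdet
    obtain ⟨v, hv0, hv⟩ := Matrix.exists_mulVec_eq_zero_iff.mpr hdet
    have hrow : ∀ a : ι, ∑ z : ι, (if z.1 ∣ a.1 then v z else 0) = 0 := by
      intro a
      have := congrFun hv a
      rw [Matrix.mulVec, dotProduct] at this
      simp only [hB, Matrix.of_apply, Pi.zero_apply] at this
      have hsum : ∑ x : ι, ((a.1 : ℚ) * if x.1 ∣ a.1 then 1 else 0) * v x
          = (a.1 : ℚ) * ∑ z : ι, (if z.1 ∣ a.1 then v z else 0) := by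
        rw [Finset.mul_sum]
        apply Finset.sum_congr rfl
        intro z _
        by_cases h : z.1 ∣ a.1
        · rw [if_pos h, if_pos h]; ring
        · rw [if_neg h, if_neg h]; ring
      have h' : (a.1 : ℚ) * ∑ z : ι, (if z.1 ∣ a.1 then v z else 0) = 0 := by
        rw [← hsum]; exact this
      have ha : (a.1 : ℚ) ≠ 0 := by exact_mod_cast hne a
      exact (mul_eq_zero.mp h').resolve_left ha
    have hzero : ∀ n : ℕ, ∀ a : ι, a.1 = n → v a = 0 := by
      intro n
      induction n using Nat.strong_induction_on with
      | _ n ih =>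
        intro a han
        have hsplit := Finset.sum_erase_add Finset.univ
          (fun z : ι => if z.1 ∣ a.1 then v z else 0) (Finset.mem_univ a)
        rw [hrow a] at hsplit
        have hz : ∑ z ∈ Finset.univ.erase a, (if z.1 ∣ a.1 then v z else 0) = 0 := by
          apply Finset.sum_eq_zero
          intro z hzmem
          have hza : z ≠ a := (Finset.mem_erase.mp hzmem).1
          by_cases h : z.1 ∣ a.1
          · have hlt : z.1 < a.1 := by
              have hne' : z.1 ≠ a.1 := fun hh => hza (Subtype.ext hh)
              exact lt_of_le_of_ne (Nat.le_of_dvd (Nat.pos_of_ne_zero (hne a)) h) hne'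
            rw [if_pos h, ih z.1 (han ▸ hlt) z rfl]
          · rw [if_neg h]
        rw [hz, zero_add] at hsplit
        simpa using hsplit
    exact hv0 (funext fun a => hzero a.1 a rfl)
  rw [key] at hsing
  rw [Matrix.det_mul, Matrix.det_mul, Matrix.det_transpose] at hsing
  have hDdet : D.det = 0 := by
    rcases mul_eq_zero.mp hsing with h | h
    · rcases mul_eq_zero.mp h with h' | h'
      · exact absurd h' hBdet
      · exact h'
    · exact absurd h hBdet
  rw [hD, Matrix.det_diagonal] at hDdet
  obtain ⟨z, _, hz⟩ := Finset.prod_eq_zero_iff.mp hDdet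
  exact ⟨z.1, z.2, hz⟩

/-- coatoms below w -/
noncomputable def coat (S : Finset ℕ) (w : ℕ) : Finset ℕ :=
  S.filter (fun y => y ∣ w ∧ y ≠ w ∧ ∀ u ∈ S, y ∣ u → u ∣ w → u = y ∨ u = w)

/-- gcd of a finset together with w -/
noncomputable def gT (w : ℕ) (T : Finset ℕ) : ℕ := Nat.gcd (T.gcd id) w

lemma gT_empty (w : ℕ) : gT w ∅ = w := by simp [gT]

lemma gT_dvd_w (w : ℕ) (T : Finset ℕ) : gT w T ∣ w := Nat.gcd_dvd_right _ _

lemma gT_dvd (w : ℕ) {T : Finset ℕ} {y : ℕ} (hy : y ∈ T) : gT w T ∣ y :=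
  (Nat.gcd_dvd_left _ _).trans (Finset.gcd_dvd hy)

lemma dvd_gT {w z : ℕ} {T : Finset ℕ} (h1 : ∀ y ∈ T, z ∣ y) (h2 : z ∣ w) : z ∣ gT w T :=
  Nat.dvd_gcd (Finset.dvd_gcd h1) h2

lemma gT_mem (S : Finset ℕ) (hg : ∀ a ∈ S, ∀ b ∈ S, Nat.gcd a b ∈ S)
    {w : ℕ} (hw : w ∈ S) {T : Finset ℕ} (hT : T ⊆ S) : gT w T ∈ S := by
  induction T using Finset.induction_on with
  | empty => simpa [gT]
  | @insert y T hyT ih =>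
    have hy : y ∈ S := hT (Finset.mem_insert_self y T)
    have hTS : T ⊆ S := fun u hu => hT (Finset.mem_insert_of_mem hu)
    have : gT w (insert y T) = Nat.gcd y (gT w T) := by
      rw [gT, Finset.gcd_insert, gT]
      exact Nat.gcd_assoc y (T.gcd id) w
    rw [this]
    exact hg y hy _ (ih hTS)

lemma coat_subset (S : Finset ℕ) (w : ℕ) : coat S w ⊆ S := Finset.filter_subset _ _

lemma coat_not_dvd {S : Finset ℕ} {w y1 y2 : ℕ} (h1 : y1 ∈ coat S w) (h2 : y2 ∈ coat S w)
    (hne : y1 ≠ y2) : ¬ y1 ∣ y2 := by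
  simp only [coat, Finset.mem_filter] at h1 h2
  intro hdvd
  rcases h1.2.2.2 y2 h2.1 hdvd h2.2.1 with h | h
  · exact hne h.symm
  · exact h2.2.2.1 h

lemma exists_coat (S : Finset ℕ) (h0 : 0 ∉ S) {w z : ℕ} (hz : z ∈ S) (hw0 : w ≠ 0)
    (hzw : z ∣ w) (hzne : z ≠ w) : ∃ y ∈ coat S w, z ∣ y := by
  set U := S.filter (fun u => z ∣ u ∧ u ∣ w ∧ u ≠ w) with hU
  have hzU : z ∈ U := by simp [hU, hz, hzw, hzne]
  have hUne : U.Nonempty := ⟨z, hzU⟩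
  set y := U.max' hUne with hy
  have hyU : y ∈ U := U.max'_mem hUne
  simp only [hU, Finset.mem_filter] at hyU
  obtain ⟨hyS, hzy, hyw, hynw⟩ := hyU
  refine ⟨y, ?_, hzy⟩
  simp only [coat, Finset.mem_filter]
  refine ⟨hyS, hyw, hynw, ?_⟩
  intro u hu hyu huw
  by_contra hcon
  push_neg at hcon
  obtain ⟨huy, hunw⟩ := hcon
  have huU : u ∈ U := by simp [hU, hu, hzy.trans hyu, huw, hunw]
  have hle : u ≤ y := U.le_max' u huU
  have : y < u := by
    have hu0 : u ≠ 0 := fun h => h0 (h ▸ hu)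
    exact lt_of_le_of_ne (Nat.le_of_dvd (Nat.pos_of_ne_zero hu0) hyu) (fun h => huy h.symm)
  omega

lemma coat_w_empty (S : Finset ℕ) {w : ℕ} (hw0 : w ≠ 0) :
    (coat S w).filter (fun y => w ∣ y) = ∅ := by
  ext y
  simp only [Finset.mem_filter, Finset.notMem_empty, iff_false, coat]
  rintro ⟨⟨_, hyw, hynw, _⟩, hwy⟩
  exact hynw (Nat.dvd_antisymm hyw hwy)

lemma crosscut (S : Finset ℕ) (h0 : 0 ∉ S)
    (hg : ∀ a ∈ S, ∀ b ∈ S, Nat.gcd a b ∈ S) {w : ℕ} (hw : w ∈ S) :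
    ∑ T ∈ (coat S w).powerset, ((-1 : ℚ))^T.card * (1 / gT w T) = psiF S w := by
  have hw0 : w ≠ 0 := fun h => h0 (h ▸ hw)
  have step1 : ∀ T ∈ (coat S w).powerset,
      ((-1 : ℚ))^T.card * (1 / gT w T)
      = ∑ y ∈ S, ((-1 : ℚ))^T.card * (if y ∣ gT w T then psiF S y else 0) := by
    intro T hT
    rw [Finset.mem_powerset] at hT
    have hmem : gT w T ∈ S := gT_mem S hg hw (hT.trans (coat_subset S w))
    rw [← Finset.mul_sum, ← Finset.sum_filter, psiF_sum S h0 hmem]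
  rw [Finset.sum_congr rfl step1, Finset.sum_comm]
  have step2 : ∀ y ∈ S,
      ∑ T ∈ (coat S w).powerset, ((-1 : ℚ))^T.card * (if y ∣ gT w T then psiF S y else 0)
      = (if y = w then psiF S y else 0) := by
    intro y hyS
    by_cases hyw : y ∣ w
    · set Cy := (coat S w).filter (fun c => y ∣ c) with hCy
      have hiff : ∀ T ∈ (coat S w).powerset, (y ∣ gT w T ↔ T ⊆ Cy) := by
        intro T hT
        rw [Finset.mem_powerset] at hT
        constructor
        · intro hd c hc
          simp only [hCy, Finset.mem_filter]
          exact ⟨hT hc, hd.trans (gT_dvd w hc)⟩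
        · intro hsub
          exact dvd_gT (fun c hc => ((Finset.mem_filter.mp (hsub hc)).2)) hyw
      have : ∑ T ∈ (coat S w).powerset, ((-1 : ℚ))^T.card * (if y ∣ gT w T then psiF S y else 0)
          = ∑ T ∈ Cy.powerset, ((-1 : ℚ))^T.card * psiF S y := by
        rw [← Finset.sum_filter_add_sum_filter_not ((coat S w).powerset) (fun T => T ⊆ Cy)]
        have h1 : (coat S w).powerset.filter (fun T => T ⊆ Cy) = Cy.powerset := by
          ext T
          simp only [Finset.mem_filter, Finset.mem_powerset]
          constructor
          · exact fun h => h.2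
          · intro h
            exact ⟨h.trans (Finset.filter_subset _ _), h⟩
        rw [h1]
        have h2 : ∀ T ∈ Cy.powerset, ((-1 : ℚ))^T.card * (if y ∣ gT w T then psiF S y else 0)
            = ((-1 : ℚ))^T.card * psiF S y := by
          intro T hT
          have hTC : T ⊆ coat S w := (Finset.mem_powerset.mp hT).trans (Finset.filter_subset _ _)
          rw [if_pos ((hiff T (Finset.mem_powerset.mpr hTC)).mpr (Finset.mem_powerset.mp hT))]
        have h3 : ∀ T ∈ (coat S w).powerset.filter (fun T => ¬ T ⊆ Cy),
            ((-1 : ℚ))^T.card * (if y ∣ gT w T then psiF S y else 0) = 0 := by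
          intro T hT
          rw [Finset.mem_filter] at hT
          rw [if_neg (fun hd => hT.2 ((hiff T hT.1).mp hd))]
          ring
        rw [Finset.sum_congr rfl h2, Finset.sum_congr rfl h3, Finset.sum_const, smul_zero, add_zero]
      rw [this, ← Finset.sum_mul]
      have hps : ∑ T ∈ Cy.powerset, ((-1 : ℚ))^T.card = if Cy = ∅ then 1 else 0 := by
        have h := Finset.sum_powerset_neg_one_pow_card (x := Cy)
        have h2 := congrArg (fun z : ℤ => (z : ℚ)) h
        push_cast at h2
        rw [h2]
      by_cases hyweq : y = w
      · subst hyweq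
        have : Cy = ∅ := coat_w_empty S hw0
        rw [hps, if_pos this, if_pos rfl, one_mul]
      · have : Cy ≠ ∅ := by
          obtain ⟨c, hc, hyc⟩ := exists_coat S h0 hyS hw0 hyw hyweq
          intro hemp
          have : c ∈ Cy := by simp [hCy, hc, hyc]
          rw [hemp] at this
          exact absurd this (Finset.notMem_empty c)
        rw [hps, if_neg this, if_neg hyweq, zero_mul]
    · have hz : ∀ T ∈ (coat S w).powerset,
          ((-1 : ℚ))^T.card * (if y ∣ gT w T then psiF S y else 0) = 0 := by
        intro T _
        rw [if_neg (fun hd => hyw (hd.trans (gT_dvd_w w T)))]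
        ring
      rw [Finset.sum_congr rfl hz, Finset.sum_const, smul_zero]
      rw [if_neg (fun h => hyw (by rw [h]))]
  rw [Finset.sum_congr rfl step2, ← Finset.sum_filter]
  have : S.filter (fun y => y = w) = {w} := by
    ext y; simp only [Finset.mem_filter, Finset.mem_singleton]
    exact ⟨fun h => h.2, fun h => ⟨h ▸ hw, h⟩⟩
  rw [this, Finset.sum_singleton]

lemma sum_pow2 {A : Finset ℕ} (hA : A.Nonempty) :
    ∑ T ∈ A.powerset.filter (fun T => 2 ≤ T.card), ((-1 : ℚ))^T.card = A.card - 1 := by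
  have h0 : ∑ T ∈ A.powerset, ((-1 : ℚ))^T.card = 0 := by
    have h := Finset.sum_powerset_neg_one_pow_card (x := A)
    have h2 := congrArg (fun z : ℤ => (z : ℚ)) h
    push_cast at h2
    rw [h2, if_neg (Finset.nonempty_iff_ne_empty.mp hA)]
  rw [← Finset.sum_filter_add_sum_filter_not A.powerset (fun T => T.card = 0)] at h0
  rw [← Finset.sum_filter_add_sum_filter_not (A.powerset.filter (fun T => ¬ T.card = 0))
    (fun T => T.card = 1)] at h0
  have e0 : A.powerset.filter (fun T => T.card = 0) = {∅} := by
    ext T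
    simp only [Finset.mem_filter, Finset.mem_powerset, Finset.mem_singleton, Finset.card_eq_zero]
    exact ⟨fun h => h.2, fun h => ⟨h ▸ Finset.empty_subset A, h⟩⟩
  have e1 : (A.powerset.filter (fun T => ¬ T.card = 0)).filter (fun T => T.card = 1)
      = A.powerset.filter (fun T => T.card = 1) := by
    ext T
    simp only [Finset.mem_filter, Finset.mem_powerset]
    constructor
    · rintro ⟨⟨h1, _⟩, h3⟩; exact ⟨h1, h3⟩
    · rintro ⟨h1, h3⟩; exact ⟨⟨h1, by omega⟩, h3⟩
  have e2 : (A.powerset.filter (fun T => ¬ T.card = 0)).filter (fun T => ¬ T.card = 1)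
      = A.powerset.filter (fun T => 2 ≤ T.card) := by
    ext T
    simp only [Finset.mem_filter, Finset.mem_powerset]
    constructor
    · rintro ⟨⟨h1, h2⟩, h3⟩; exact ⟨h1, by omega⟩
    · rintro ⟨h1, h3⟩; exact ⟨⟨h1, by omega⟩, by omega⟩
  have s1 : ∑ T ∈ A.powerset.filter (fun T => T.card = 1), ((-1 : ℚ))^T.card = -(A.card) := by
    have : A.powerset.filter (fun T => T.card = 1) = Finset.powersetCard 1 A := by
      rw [Finset.powersetCard_eq_filter]
    rw [this, Finset.powersetCard_one, Finset.sum_map]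
    simp
  rw [e0, e1, e2, s1] at h0
  simp only [Finset.sum_singleton, Finset.card_empty, pow_zero] at h0
  linarith

lemma powerset_sum_split (C : Finset ℕ) (f : Finset ℕ → ℚ) :
    ∑ T ∈ C.powerset, f T
    = f ∅ + (∑ y ∈ C, f {y}) + ∑ T ∈ C.powerset.filter (fun T => 2 ≤ T.card), f T := by
  rw [← Finset.sum_filter_add_sum_filter_not C.powerset (fun T => T.card = 0)]
  rw [← Finset.sum_filter_add_sum_filter_not (C.powerset.filter (fun T => ¬ T.card = 0))
    (fun T => T.card = 1)]
  have e0 : C.powerset.filter (fun T => T.card = 0) = {∅} := by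
    ext T
    simp only [Finset.mem_filter, Finset.mem_powerset, Finset.mem_singleton, Finset.card_eq_zero]
    exact ⟨fun h => h.2, fun h => ⟨h ▸ Finset.empty_subset C, h⟩⟩
  have e1 : (C.powerset.filter (fun T => ¬ T.card = 0)).filter (fun T => T.card = 1)
      = C.powerset.filter (fun T => T.card = 1) := by
    ext T
    simp only [Finset.mem_filter, Finset.mem_powerset]
    exact ⟨fun ⟨⟨h1, _⟩, h3⟩ => ⟨h1, h3⟩, fun ⟨h1, h3⟩ => ⟨⟨h1, by omega⟩, h3⟩⟩
  have e2 : (C.powerset.filter (fun T => ¬ T.card = 0)).filter (fun T => ¬ T.card = 1)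
      = C.powerset.filter (fun T => 2 ≤ T.card) := by
    ext T
    simp only [Finset.mem_filter, Finset.mem_powerset]
    exact ⟨fun ⟨⟨h1, h2⟩, h3⟩ => ⟨h1, by omega⟩, fun ⟨h1, h3⟩ => ⟨⟨h1, by omega⟩, by omega⟩⟩
  have s1 : ∑ T ∈ C.powerset.filter (fun T => T.card = 1), f T = ∑ y ∈ C, f {y} := by
    have : C.powerset.filter (fun T => T.card = 1) = Finset.powersetCard 1 C := by
      rw [Finset.powersetCard_eq_filter]
    rw [this, Finset.powersetCard_one, Finset.sum_map]
    rfl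
  rw [e0, e1, e2, s1, Finset.sum_singleton]
  ring

lemma inv_le_of_two_mul_le {m y : ℕ} (hm : 1 ≤ m) (h : 2 * m ≤ y) :
    (1 : ℚ) / y ≤ 1 / (2 * m) := by
  have hm' : (0 : ℚ) < 2 * m := by positivity
  have hy' : (2 * m : ℚ) ≤ y := by exact_mod_cast h
  rw [div_le_div_iff₀ (by linarith) hm']
  linarith

lemma pos_chain (C : Finset ℕ) (gv : Finset ℕ → ℕ) (w b m1 m2 : ℕ) (A1 A2 : Finset ℕ)
    (hw1 : 1 ≤ w) (hb1 : 1 ≤ b) (hm11 : 1 ≤ m1) (hm21 : 1 ≤ m2)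
    (hge : gv ∅ = w) (hgs : ∀ y ∈ C, gv {y} = y)
    (hC2 : 2 ≤ C.card)
    (hA1C : A1 ⊆ C) (hA21 : A2 ⊆ A1)
    (hg2 : ∀ T, T ⊆ C → 2 ≤ T.card → T ⊆ A2 → gv T = m2)
    (hg1 : ∀ T, T ⊆ C → 2 ≤ T.card → T ⊆ A1 → ¬ T ⊆ A2 → gv T = m1)
    (hgb : ∀ T, T ⊆ C → 2 ≤ T.card → ¬ T ⊆ A1 → gv T = b)
    (hA2card : A2 = ∅ ∨ 2 ≤ A2.card)
    (hA1card : A1 = A2 ∨ 2 ≤ A1.card)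
    (hm2y : ∀ y ∈ A2, 2 * m2 ≤ y)
    (hm1y : ∀ y ∈ A1, 2 * m1 ≤ y)
    (hby : ∀ y ∈ C, 2 * b ≤ y) :
    0 < ∑ T ∈ C.powerset, ((-1 : ℚ))^T.card * (1 / gv T) := by
  set f : Finset ℕ → ℚ := fun T => ((-1 : ℚ))^T.card * (1 / gv T) with hf
  rw [powerset_sum_split C f]
  have hfe : f ∅ = 1 / w := by simp [hf, hge]
  have hfs : ∑ y ∈ C, f {y} = - ∑ y ∈ C, 1 / (y : ℚ) := by
    rw [← Finset.sum_neg_distrib]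
    apply Finset.sum_congr rfl
    intro y hy
    simp [hf, hgs y hy]
  set Pow2 := C.powerset.filter (fun T => 2 ≤ T.card) with hPow2
  -- group index sets
  have hsub_eq : ∀ A : Finset ℕ, A ⊆ C →
      Pow2.filter (fun T => T ⊆ A) = A.powerset.filter (fun T => 2 ≤ T.card) := by
    intro A hAC
    ext T
    simp only [hPow2, Finset.mem_filter, Finset.mem_powerset]
    exact ⟨fun ⟨⟨_, h2⟩, h3⟩ => ⟨h3, h2⟩, fun ⟨h1, h2⟩ => ⟨⟨h1.trans hAC, h2⟩, h1⟩⟩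
  -- coefficient computation
  have hcoef : ∀ A : Finset ℕ, A ⊆ C →
      ∑ T ∈ A.powerset.filter (fun T => 2 ≤ T.card), ((-1 : ℚ))^T.card
      = if A = ∅ then 0 else (A.card : ℚ) - 1 := by
    intro A hAC
    by_cases hA : A = ∅
    · subst hA
      rw [if_pos rfl]
      apply Finset.sum_eq_zero
      intro T hT
      simp only [Finset.mem_filter, Finset.powerset_empty, Finset.mem_singleton] at hT
      obtain ⟨rfl, h2⟩ := hT
      simp at h2
    · rw [if_neg hA]
      exact sum_pow2 (Finset.nonempty_iff_ne_empty.mpr hA)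
  -- split Pow2 sum
  have hsplit : ∑ T ∈ Pow2, f T
      = (∑ T ∈ Pow2.filter (fun T => T ⊆ A2), f T)
      + (∑ T ∈ (Pow2.filter (fun T => T ⊆ A1)).filter (fun T => ¬ T ⊆ A2), f T)
      + (∑ T ∈ Pow2.filter (fun T => ¬ T ⊆ A1), f T) := by
    have heq : (Pow2.filter (fun T => T ⊆ A1)).filter (fun T => T ⊆ A2)
        = Pow2.filter (fun T => T ⊆ A2) := by
      ext T
      simp only [Finset.mem_filter]
      exact ⟨fun ⟨⟨h1, _⟩, h3⟩ => ⟨h1, h3⟩, fun ⟨h1, h3⟩ => ⟨⟨h1, (h3.trans hA21 : T ⊆ A1)⟩, h3⟩⟩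
    rw [← Finset.sum_filter_add_sum_filter_not Pow2 (fun T => T ⊆ A1)]
    rw [← Finset.sum_filter_add_sum_filter_not (Pow2.filter (fun T => T ⊆ A1)) (fun T => T ⊆ A2)]
    rw [heq]
  -- each group is a constant multiple
  have hmem2 : ∀ T ∈ Pow2.filter (fun T => T ⊆ A2), f T = ((-1 : ℚ))^T.card * (1 / m2) := by
    intro T hT
    simp only [hPow2, Finset.mem_filter, Finset.mem_powerset] at hT
    rw [hf]
    simp only
    rw [hg2 T hT.1.1 hT.1.2 hT.2]
  have hmem1 : ∀ T ∈ (Pow2.filter (fun T => T ⊆ A1)).filter (fun T => ¬ T ⊆ A2),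
      f T = ((-1 : ℚ))^T.card * (1 / m1) := by
    intro T hT
    simp only [hPow2, Finset.mem_filter, Finset.mem_powerset] at hT
    rw [hf]
    simp only
    rw [hg1 T hT.1.1.1 hT.1.1.2 hT.1.2 hT.2]
  have hmemb : ∀ T ∈ Pow2.filter (fun T => ¬ T ⊆ A1), f T = ((-1 : ℚ))^T.card * (1 / b) := by
    intro T hT
    simp only [hPow2, Finset.mem_filter, Finset.mem_powerset] at hT
    rw [hf]
    simp only
    rw [hgb T hT.1.1 hT.1.2 hT.2]
  set c2 : ℚ := ∑ T ∈ Pow2.filter (fun T => T ⊆ A2), ((-1 : ℚ))^T.card with hc2def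
  set c1 : ℚ := ∑ T ∈ (Pow2.filter (fun T => T ⊆ A1)).filter (fun T => ¬ T ⊆ A2),
      ((-1 : ℚ))^T.card with hc1def
  set cb : ℚ := ∑ T ∈ Pow2.filter (fun T => ¬ T ⊆ A1), ((-1 : ℚ))^T.card with hcbdef
  have hsum2 : ∑ T ∈ Pow2.filter (fun T => T ⊆ A2), f T = c2 * (1 / m2) := by
    rw [Finset.sum_congr rfl hmem2, ← Finset.sum_mul]
  have hsum1 : ∑ T ∈ (Pow2.filter (fun T => T ⊆ A1)).filter (fun T => ¬ T ⊆ A2), f T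
      = c1 * (1 / m1) := by
    rw [Finset.sum_congr rfl hmem1, ← Finset.sum_mul]
  have hsumb : ∑ T ∈ Pow2.filter (fun T => ¬ T ⊆ A1), f T = cb * (1 / b) := by
    rw [Finset.sum_congr rfl hmemb, ← Finset.sum_mul]
  -- coefficient values
  have hc2val : c2 = if A2 = ∅ then 0 else (A2.card : ℚ) - 1 := by
    rw [hc2def, hsub_eq A2 (hA21.trans hA1C), hcoef A2 (hA21.trans hA1C)]
  have hA1sum : ∑ T ∈ Pow2.filter (fun T => T ⊆ A1), ((-1 : ℚ))^T.card
      = if A1 = ∅ then 0 else (A1.card : ℚ) - 1 := by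
    rw [hsub_eq A1 hA1C]; exact hcoef A1 hA1C
  have hc12 : c1 + c2 = if A1 = ∅ then 0 else (A1.card : ℚ) - 1 := by
    have h2 := Finset.sum_filter_add_sum_filter_not (Pow2.filter (fun T => T ⊆ A1))
      (fun T => T ⊆ A2) (fun T => ((-1 : ℚ))^T.card)
    have heq : (Pow2.filter (fun T => T ⊆ A1)).filter (fun T => T ⊆ A2)
        = Pow2.filter (fun T => T ⊆ A2) := by
      ext T
      simp only [Finset.mem_filter]
      exact ⟨fun ⟨⟨h1, _⟩, h3⟩ => ⟨h1, h3⟩, fun ⟨h1, h3⟩ => ⟨⟨h1, (h3.trans hA21 : T ⊆ A1)⟩, h3⟩⟩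
    rw [heq, hA1sum] at h2
    linarith [h2]
  have hctot : c2 + c1 + cb = (C.card : ℚ) - 1 := by
    have h1 := Finset.sum_filter_add_sum_filter_not Pow2 (fun T => T ⊆ A1)
      (fun T => ((-1 : ℚ))^T.card)
    have htot : ∑ T ∈ Pow2, ((-1 : ℚ))^T.card = (C.card : ℚ) - 1 := by
      rw [hPow2]
      exact sum_pow2 (Finset.card_pos.mp (by omega))
    rw [htot, hA1sum] at h1
    have h2 := hc12
    rw [hA1sum.symm] at h2
    linarith [h1, h2]
  -- cardinal bookkeeping
  have ha21 : A2.card ≤ A1.card := Finset.card_le_card hA21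
  have ha1t : A1.card ≤ C.card := Finset.card_le_card hA1C
  -- coefficient inequalities
  have hq2 : ((A2.card : ℚ)) / 2 ≤ c2 := by
    rw [hc2val]
    rcases hA2card with h | h
    · simp [h]
    · rw [if_neg (by intro hh; rw [hh] at h; simp at h)]
      have : (2 : ℚ) ≤ A2.card := by exact_mod_cast h
      linarith
  have hq1 : ((A1.card : ℚ) - A2.card) / 2 ≤ c1 := by
    have hc1 : c1 = (if A1 = ∅ then 0 else (A1.card : ℚ) - 1)
        - (if A2 = ∅ then 0 else (A2.card : ℚ) - 1) := by
      rw [← hc12, hc2val]; ring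
    rcases hA1card with h | h
    · -- A1 = A2
      subst h
      rw [hc1]
      simp
    · rw [hc1, if_neg (by intro hh; rw [hh] at h; simp at h)]
      have h2 : (2 : ℚ) ≤ A1.card := by exact_mod_cast h
      rcases hA2card with h' | h'
      · rw [if_pos h', h']
        simp only [Finset.card_empty, Nat.cast_zero, sub_zero]
        linarith
      · rw [if_neg (by intro hh; rw [hh] at h'; simp at h')]
        have ha : (A2.card : ℚ) ≤ A1.card := by exact_mod_cast ha21
        linarith
  have hqb : ((C.card : ℚ) - A1.card) / 2 ≤ cb := by
    have hcb : cb = ((C.card : ℚ) - 1) - (c1 + c2) := by rw [← hctot]; ring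
    rw [hcb, hc12]
    by_cases h : A1 = ∅
    · rw [if_pos h, h]
      have ht : (2 : ℚ) ≤ C.card := by exact_mod_cast hC2
      simp only [Finset.card_empty, Nat.cast_zero, sub_zero]
      linarith
    · rw [if_neg h]
      have ha : (A1.card : ℚ) ≤ C.card := by exact_mod_cast ha1t
      linarith
  -- sum of reciprocals bounds
  have hsA2 : ∑ y ∈ A2, (1 : ℚ) / y ≤ (A2.card : ℚ) * (1 / (2 * m2)) := by
    have := Finset.sum_le_card_nsmul A2 (fun y => (1 : ℚ) / y) (1 / (2 * m2))
      (fun y hy => inv_le_of_two_mul_le hm21 (hm2y y hy))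
    simpa [nsmul_eq_mul] using this
  have hsA12 : ∑ y ∈ A1 \ A2, (1 : ℚ) / y ≤ ((A1.card : ℚ) - A2.card) * (1 / (2 * m1)) := by
    have := Finset.sum_le_card_nsmul (A1 \ A2) (fun y => (1 : ℚ) / y) (1 / (2 * m1))
      (fun y hy => inv_le_of_two_mul_le hm11 (hm1y y (Finset.mem_sdiff.mp hy).1))
    rw [Finset.card_sdiff_of_subset hA21] at this
    have hcast : ((A1.card - A2.card : ℕ) : ℚ) = (A1.card : ℚ) - A2.card := by
      push_cast [ha21]; ring
    rw [← hcast]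
    simpa [nsmul_eq_mul] using this
  have hsC1 : ∑ y ∈ C \ A1, (1 : ℚ) / y ≤ ((C.card : ℚ) - A1.card) * (1 / (2 * b)) := by
    have := Finset.sum_le_card_nsmul (C \ A1) (fun y => (1 : ℚ) / y) (1 / (2 * b))
      (fun y hy => inv_le_of_two_mul_le hb1 (hby y (Finset.mem_sdiff.mp hy).1))
    rw [Finset.card_sdiff_of_subset hA1C] at this
    have hcast : ((C.card - A1.card : ℕ) : ℚ) = (C.card : ℚ) - A1.card := by
      push_cast [ha1t]; ring
    rw [← hcast]
    simpa [nsmul_eq_mul] using this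
  have hsC : ∑ y ∈ C, (1 : ℚ) / y
      = (∑ y ∈ A2, (1 : ℚ) / y) + (∑ y ∈ A1 \ A2, (1 : ℚ) / y)
      + (∑ y ∈ C \ A1, (1 : ℚ) / y) := by
    rw [add_assoc]
    rw [← Finset.sum_sdiff hA1C]
    rw [← Finset.sum_sdiff hA21]
    ring
  -- positivity of reciprocals
  have hm2pos : (0 : ℚ) < 1 / (m2 : ℚ) := by
    have : (0:ℚ) < m2 := by exact_mod_cast hm21; 
    positivity
  have hm1pos : (0 : ℚ) < 1 / (m1 : ℚ) := by
    have : (0:ℚ) < m1 := by exact_mod_cast hm11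
    positivity
  have hbpos : (0 : ℚ) < 1 / (b : ℚ) := by
    have : (0:ℚ) < b := by exact_mod_cast hb1
    positivity
  have hwpos : (0 : ℚ) < 1 / (w : ℚ) := by
    have : (0:ℚ) < w := by exact_mod_cast hw1
    positivity
  -- combine
  rw [hsplit, hsum2, hsum1, hsumb, hfe, hfs]
  have k2 : ((A2.card : ℚ)) / 2 * (1 / m2) ≤ c2 * (1 / m2) :=
    mul_le_mul_of_nonneg_right hq2 (le_of_lt hm2pos)
  have k1 : ((A1.card : ℚ) - A2.card) / 2 * (1 / m1) ≤ c1 * (1 / m1) :=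
    mul_le_mul_of_nonneg_right hq1 (le_of_lt hm1pos)
  have kb : ((C.card : ℚ) - A1.card) / 2 * (1 / b) ≤ cb * (1 / b) :=
    mul_le_mul_of_nonneg_right hqb (le_of_lt hbpos)
  have e2 : ((A2.card : ℚ)) * (1 / (2 * m2)) = (A2.card : ℚ) / 2 * (1 / m2) := by
    ring
  have e1 : ((A1.card : ℚ) - A2.card) * (1 / (2 * m1))
      = ((A1.card : ℚ) - A2.card) / 2 * (1 / m1) := by ring
  have eb : ((C.card : ℚ) - A1.card) * (1 / (2 * b))
      = ((C.card : ℚ) - A1.card) / 2 * (1 / b) := by ring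
  rw [hsC]
  rw [e2] at hsA2
  rw [e1] at hsA12
  rw [eb] at hsC1
  linarith

lemma pos_anti (C : Finset ℕ) (gv : Finset ℕ → ℕ) (w b m1 m2 : ℕ) (A1 A2 : Finset ℕ)
    (hw1 : 1 ≤ w) (hb1 : 1 ≤ b) (hm11 : 1 ≤ m1) (hm21 : 1 ≤ m2)
    (hge : gv ∅ = w) (hgs : ∀ y ∈ C, gv {y} = y)
    (hC2 : 2 ≤ C.card)
    (hA1C : A1 ⊆ C) (hA2C : A2 ⊆ C)
    (hI : (A1 ∩ A2).card ≤ 1)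
    (ha1 : 2 ≤ A1.card) (ha2 : 2 ≤ A2.card)
    (hg1 : ∀ T, T ⊆ C → 2 ≤ T.card → T ⊆ A1 → gv T = m1)
    (hg2 : ∀ T, T ⊆ C → 2 ≤ T.card → T ⊆ A2 → gv T = m2)
    (hgb : ∀ T, T ⊆ C → 2 ≤ T.card → ¬ T ⊆ A1 → ¬ T ⊆ A2 → gv T = b)
    (hm1y : ∀ y ∈ A1, 2 * m1 ≤ y)
    (hm2y : ∀ y ∈ A2, 2 * m2 ≤ y)
    (hby : ∀ y ∈ C, 2 * b ≤ y) :
    0 < ∑ T ∈ C.powerset, ((-1 : ℚ))^T.card * (1 / gv T) := by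
  set f : Finset ℕ → ℚ := fun T => ((-1 : ℚ))^T.card * (1 / gv T) with hf
  rw [powerset_sum_split C f]
  have hfe : f ∅ = 1 / w := by simp [hf, hge]
  have hfs : ∑ y ∈ C, f {y} = - ∑ y ∈ C, 1 / (y : ℚ) := by
    rw [← Finset.sum_neg_distrib]
    apply Finset.sum_congr rfl
    intro y hy
    simp [hf, hgs y hy]
  set Pow2 := C.powerset.filter (fun T => 2 ≤ T.card) with hPow2
  have hsub_eq : ∀ A : Finset ℕ, A ⊆ C →
      Pow2.filter (fun T => T ⊆ A) = A.powerset.filter (fun T => 2 ≤ T.card) := by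
    intro A hAC
    ext T
    simp only [hPow2, Finset.mem_filter, Finset.mem_powerset]
    exact ⟨fun ⟨⟨_, h2⟩, h3⟩ => ⟨h3, h2⟩, fun ⟨h1, h2⟩ => ⟨⟨h1.trans hAC, h2⟩, h1⟩⟩
  -- key: in Pow2, T ⊆ A2 implies ¬ T ⊆ A1
  have hkey : ∀ T ∈ Pow2, T ⊆ A2 → ¬ T ⊆ A1 := by
    intro T hT h2 h1
    simp only [hPow2, Finset.mem_filter] at hT
    have : T ⊆ A1 ∩ A2 := Finset.subset_inter h1 h2
    have := Finset.card_le_card this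
    omega
  have heq2 : (Pow2.filter (fun T => ¬ T ⊆ A1)).filter (fun T => T ⊆ A2)
      = Pow2.filter (fun T => T ⊆ A2) := by
    ext T
    simp only [Finset.mem_filter]
    constructor
    · rintro ⟨⟨h1, _⟩, h3⟩; exact ⟨h1, h3⟩
    · rintro ⟨h1, h3⟩; exact ⟨⟨h1, hkey T h1 h3⟩, h3⟩
  have hsplit : ∑ T ∈ Pow2, f T
      = (∑ T ∈ Pow2.filter (fun T => T ⊆ A1), f T)
      + (∑ T ∈ Pow2.filter (fun T => T ⊆ A2), f T)
      + (∑ T ∈ (Pow2.filter (fun T => ¬ T ⊆ A1)).filter (fun T => ¬ T ⊆ A2), f T) := by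
    rw [← Finset.sum_filter_add_sum_filter_not Pow2 (fun T => T ⊆ A1)]
    rw [← Finset.sum_filter_add_sum_filter_not (Pow2.filter (fun T => ¬ T ⊆ A1))
      (fun T => T ⊆ A2)]
    rw [heq2]
    ring
  have hmem1 : ∀ T ∈ Pow2.filter (fun T => T ⊆ A1), f T = ((-1 : ℚ))^T.card * (1 / m1) := by
    intro T hT
    simp only [hPow2, Finset.mem_filter, Finset.mem_powerset] at hT
    rw [hf]; simp only
    rw [hg1 T hT.1.1 hT.1.2 hT.2]
  have hmem2 : ∀ T ∈ Pow2.filter (fun T => T ⊆ A2), f T = ((-1 : ℚ))^T.card * (1 / m2) := by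
    intro T hT
    simp only [hPow2, Finset.mem_filter, Finset.mem_powerset] at hT
    rw [hf]; simp only
    rw [hg2 T hT.1.1 hT.1.2 hT.2]
  have hmemb : ∀ T ∈ (Pow2.filter (fun T => ¬ T ⊆ A1)).filter (fun T => ¬ T ⊆ A2),
      f T = ((-1 : ℚ))^T.card * (1 / b) := by
    intro T hT
    simp only [hPow2, Finset.mem_filter, Finset.mem_powerset] at hT
    rw [hf]; simp only
    rw [hgb T hT.1.1.1 hT.1.1.2 hT.1.2 hT.2]
  set c1 : ℚ := ∑ T ∈ Pow2.filter (fun T => T ⊆ A1), ((-1 : ℚ))^T.card with hc1def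
  set c2 : ℚ := ∑ T ∈ Pow2.filter (fun T => T ⊆ A2), ((-1 : ℚ))^T.card with hc2def
  set cb : ℚ := ∑ T ∈ (Pow2.filter (fun T => ¬ T ⊆ A1)).filter (fun T => ¬ T ⊆ A2),
      ((-1 : ℚ))^T.card with hcbdef
  have hsum1 : ∑ T ∈ Pow2.filter (fun T => T ⊆ A1), f T = c1 * (1 / m1) := by
    rw [Finset.sum_congr rfl hmem1, ← Finset.sum_mul]
  have hsum2 : ∑ T ∈ Pow2.filter (fun T => T ⊆ A2), f T = c2 * (1 / m2) := by
    rw [Finset.sum_congr rfl hmem2, ← Finset.sum_mul]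
  have hsumb : ∑ T ∈ (Pow2.filter (fun T => ¬ T ⊆ A1)).filter (fun T => ¬ T ⊆ A2), f T
      = cb * (1 / b) := by
    rw [Finset.sum_congr rfl hmemb, ← Finset.sum_mul]
  have hA1ne : A1.Nonempty := Finset.card_pos.mp (by omega)
  have hA2ne : A2.Nonempty := Finset.card_pos.mp (by omega)
  have hc1val : c1 = (A1.card : ℚ) - 1 := by
    rw [hc1def, hsub_eq A1 hA1C]
    exact sum_pow2 hA1ne
  have hc2val : c2 = (A2.card : ℚ) - 1 := by
    rw [hc2def, hsub_eq A2 hA2C]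
    exact sum_pow2 hA2ne
  have hctot : c1 + c2 + cb = (C.card : ℚ) - 1 := by
    have h1 := Finset.sum_filter_add_sum_filter_not Pow2 (fun T => T ⊆ A1)
      (fun T => ((-1 : ℚ))^T.card)
    have h2 := Finset.sum_filter_add_sum_filter_not (Pow2.filter (fun T => ¬ T ⊆ A1))
      (fun T => T ⊆ A2) (fun T => ((-1 : ℚ))^T.card)
    rw [heq2] at h2
    have htot : ∑ T ∈ Pow2, ((-1 : ℚ))^T.card = (C.card : ℚ) - 1 := by
      rw [hPow2]
      exact sum_pow2 (Finset.card_pos.mp (by omega))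
    rw [htot] at h1
    linarith [h1, h2]
  -- cardinalities
  set i := (A1 ∩ A2).card with hidef
  have hu : (A1 ∪ A2).card + i = A1.card + A2.card := Finset.card_union_add_card_inter A1 A2
  have huC : (A1 ∪ A2).card ≤ C.card := Finset.card_le_card (Finset.union_subset hA1C hA2C)
  have hsd2 : (A2 \ A1).card + i = A2.card := by
    rw [hidef, Finset.inter_comm]
    exact Finset.card_sdiff_add_card_inter A2 A1
  have hsdb : (C \ (A1 ∪ A2)).card = C.card - (A1 ∪ A2).card :=
    Finset.card_sdiff_of_subset (Finset.union_subset hA1C hA2C)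
  -- sum of reciprocals bounds
  have hsA1 : ∑ y ∈ A1, (1 : ℚ) / y ≤ (A1.card : ℚ) * (1 / (2 * m1)) := by
    have := Finset.sum_le_card_nsmul A1 (fun y => (1 : ℚ) / y) (1 / (2 * m1))
      (fun y hy => inv_le_of_two_mul_le hm11 (hm1y y hy))
    simpa [nsmul_eq_mul] using this
  have hsA2 : ∑ y ∈ A2 \ A1, (1 : ℚ) / y ≤ ((A2 \ A1).card : ℚ) * (1 / (2 * m2)) := by
    have := Finset.sum_le_card_nsmul (A2 \ A1) (fun y => (1 : ℚ) / y) (1 / (2 * m2))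
      (fun y hy => inv_le_of_two_mul_le hm21 (hm2y y (Finset.mem_sdiff.mp hy).1))
    simpa [nsmul_eq_mul] using this
  have hsCb : ∑ y ∈ C \ (A1 ∪ A2), (1 : ℚ) / y ≤ ((C \ (A1 ∪ A2)).card : ℚ) * (1 / (2 * b)) := by
    have := Finset.sum_le_card_nsmul (C \ (A1 ∪ A2)) (fun y => (1 : ℚ) / y) (1 / (2 * b))
      (fun y hy => inv_le_of_two_mul_le hb1 (hby y (Finset.mem_sdiff.mp hy).1))
    simpa [nsmul_eq_mul] using this
  have hsC : ∑ y ∈ C, (1 : ℚ) / y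
      = (∑ y ∈ A1, (1 : ℚ) / y) + (∑ y ∈ A2 \ A1, (1 : ℚ) / y)
      + (∑ y ∈ C \ (A1 ∪ A2), (1 : ℚ) / y) := by
    have h1 : ∑ y ∈ A1 ∪ A2, (1 : ℚ) / y
        = (∑ y ∈ A1, (1 : ℚ) / y) + (∑ y ∈ A2 \ A1, (1 : ℚ) / y) := by
      rw [← Finset.sum_union (Finset.disjoint_sdiff)]
      congr 1
      rw [Finset.union_sdiff_self_eq_union]
    rw [← h1, ← Finset.sum_sdiff (Finset.union_subset hA1C hA2C)]
    ring
  have hm1pos : (0 : ℚ) < 1 / (m1 : ℚ) := by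
    have : (0:ℚ) < m1 := by exact_mod_cast hm11
    positivity
  have hm2pos : (0 : ℚ) < 1 / (m2 : ℚ) := by
    have : (0:ℚ) < m2 := by exact_mod_cast hm21
    positivity
  have hbpos : (0 : ℚ) < 1 / (b : ℚ) := by
    have : (0:ℚ) < b := by exact_mod_cast hb1
    positivity
  have hwpos : (0 : ℚ) < 1 / (w : ℚ) := by
    have : (0:ℚ) < w := by exact_mod_cast hw1
    positivity
  -- coefficient inequalities (in ℚ)
  have hia : (i : ℚ) ≤ 1 := by exact_mod_cast hI
  have ha1q : (2 : ℚ) ≤ A1.card := by exact_mod_cast ha1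
  have ha2q : (2 : ℚ) ≤ A2.card := by exact_mod_cast ha2
  have huq : ((A1 ∪ A2).card : ℚ) + i = (A1.card : ℚ) + A2.card := by exact_mod_cast hu
  have huCq : ((A1 ∪ A2).card : ℚ) ≤ C.card := by exact_mod_cast huC
  have hsd2q : ((A2 \ A1).card : ℚ) + i = A2.card := by exact_mod_cast hsd2
  have hsdbq : ((C \ (A1 ∪ A2)).card : ℚ) = (C.card : ℚ) - (A1 ∪ A2).card := by
    rw [hsdb]
    push_cast [huC]
    ring
  have hq1 : ((A1.card : ℚ)) / 2 ≤ c1 := by rw [hc1val]; linarith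
  have hq2 : (((A2 \ A1).card : ℚ)) / 2 ≤ c2 := by rw [hc2val]; linarith
  have hqb : (((C \ (A1 ∪ A2)).card : ℚ)) / 2 ≤ cb := by
    have hcb : cb = ((C.card : ℚ) - 1) - c1 - c2 := by linarith [hctot]
    rw [hcb, hc1val, hc2val, hsdbq]
    linarith
  rw [hsplit, hsum1, hsum2, hsumb, hfe, hfs, hsC]
  have k1 : ((A1.card : ℚ)) / 2 * (1 / m1) ≤ c1 * (1 / m1) :=
    mul_le_mul_of_nonneg_right hq1 (le_of_lt hm1pos)
  have k2 : (((A2 \ A1).card : ℚ)) / 2 * (1 / m2) ≤ c2 * (1 / m2) :=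
    mul_le_mul_of_nonneg_right hq2 (le_of_lt hm2pos)
  have kb : (((C \ (A1 ∪ A2)).card : ℚ)) / 2 * (1 / b) ≤ cb * (1 / b) :=
    mul_le_mul_of_nonneg_right hqb (le_of_lt hbpos)
  have e1 : ((A1.card : ℚ)) * (1 / (2 * m1)) = (A1.card : ℚ) / 2 * (1 / m1) := by field_simp
  have e2 : (((A2 \ A1).card : ℚ)) * (1 / (2 * m2)) = ((A2 \ A1).card : ℚ) / 2 * (1 / m2) := by
    field_simp
  have eb : (((C \ (A1 ∪ A2)).card : ℚ)) * (1 / (2 * b))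
      = ((C \ (A1 ∪ A2)).card : ℚ) / 2 * (1 / b) := by field_simp
  rw [e1] at hsA1
  rw [e2] at hsA2
  rw [eb] at hsCb
  linarith

lemma two_mul_le_of_dvd {m y : ℕ} (h : m ∣ y) (hne : m ≠ y) (hy : y ≠ 0) : 2 * m ≤ y := by
  obtain ⟨k, rfl⟩ := h
  rcases Nat.lt_or_ge k 2 with hk | hk
  · interval_cases k <;> simp_all <;> omega
  · have hm : 1 ≤ m := by
      rcases Nat.eq_zero_or_pos m with h | h
      · simp [h] at hy
      · exact h
    calc 2 * m ≤ k * m := by exact Nat.mul_le_mul_right m hk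
    _ = m * k := Nat.mul_comm k m
lemma pair_sub3 {a b y1 y2 y3 : ℕ} (ha : a = y1 ∨ a = y2 ∨ a = y3)
    (hb : b = y1 ∨ b = y2 ∨ b = y3) (hab : a ≠ b) :
    ({a, b} : Finset ℕ) = {y1, y2} ∨ ({a, b} : Finset ℕ) = {y1, y3} ∨
      ({a, b} : Finset ℕ) = {y2, y3} := by
  rcases ha with rfl | rfl | rfl <;> rcases hb with rfl | rfl | rfl <;>
    first
      | exact absurd rfl hab
      | exact Or.inl rfl
      | exact Or.inr (Or.inl rfl)
      | exact Or.inr (Or.inr rfl)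
      | exact Or.inl (Finset.pair_comm _ _)
      | exact Or.inr (Or.inl (Finset.pair_comm _ _))
      | exact Or.inr (Or.inr (Finset.pair_comm _ _))

lemma card3_le (x y z : ℕ) : ({x, y, z} : Finset ℕ).card ≤ 3 := by
  apply le_trans (Finset.card_insert_le _ _)
  have := Finset.card_insert_le y ({z} : Finset ℕ)
  simp at this ⊢
  omega
theorem stmt11 (S : Finset ℕ) (h0 : 0 ∉ S)
    (hg : ∀ a ∈ S, ∀ b ∈ S, Nat.gcd a b ∈ S)
    (hcard : S.card = 8)
    (hsing : (Matrix.of fun a b : {x // x ∈ S} => (Nat.lcm a.1 b.1 : ℚ)).det = 0) :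
    ∃ f : {x // x ∈ S} → Finset (Fin 3), Function.Bijective f ∧
      ∀ a b : {x // x ∈ S}, (a.1 ∣ b.1 ↔ f a ⊆ f b) := by
  obtain ⟨w, hwS, hpsi⟩ := exists_psi_zero S h0 hg hsing
  have hcc := crosscut S h0 hg hwS
  rw [hpsi] at hcc
  have hSpos : ∀ x ∈ S, 1 ≤ x := fun x hx =>
    Nat.pos_of_ne_zero (fun h => h0 (h ▸ hx))
  have hw1 : 1 ≤ w := hSpos w hwS
  have hw0 : w ≠ 0 := by omega
  set C := coat S w with hC
  have hCmem : ∀ y ∈ C, y ∈ S ∧ y ∣ w ∧ y ≠ w := by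
    intro y hy
    simp only [hC, coat, Finset.mem_filter] at hy
    exact ⟨hy.1, hy.2.1, hy.2.2.1⟩
  have hCS : C ⊆ S := coat_subset S w
  have hwq : (0:ℚ) < 1 / w := by
    have : (0:ℚ) < w := by exact_mod_cast hw1
    positivity
  -- case t = 0
  rcases Nat.lt_or_ge C.card 2 with htlt | ht2
  · interval_cases h : C.card
    · -- t = 0
      have hCe : C = ∅ := Finset.card_eq_zero.mp h
      rw [hCe] at hcc
      rw [Finset.powerset_empty, Finset.sum_singleton] at hcc
      simp only [Finset.card_empty, pow_zero, one_mul, gT_empty] at hcc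
      rw [hcc] at hwq
      exact absurd hwq (lt_irrefl _)
    · -- t = 1
      exfalso
      obtain ⟨y, hCy⟩ := Finset.card_eq_one.mp h
      have hyC : y ∈ C := by rw [hCy]; exact Finset.mem_singleton_self y
      obtain ⟨hyS, hyw, hynw⟩ := hCmem y hyC
      rw [hCy] at hcc
      rw [powerset_sum_split {y} (fun T => ((-1 : ℚ))^T.card * (1 / gT w T))] at hcc
      have h3 : ({y} : Finset ℕ).powerset.filter (fun T => 2 ≤ T.card) = ∅ := by
        ext T
        simp only [Finset.mem_filter, Finset.mem_powerset, Finset.notMem_empty, iff_false]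
        rintro ⟨h1, h2⟩
        have := Finset.card_le_card h1
        simp only [Finset.card_singleton] at this
        omega
      rw [h3, Finset.sum_empty, Finset.sum_singleton] at hcc
      have hgy : gT w {y} = y := by
        simp [gT, Nat.gcd_eq_left hyw]
      rw [hgy, gT_empty] at hcc
      simp only [Finset.card_empty, pow_zero, one_mul, Finset.card_singleton, pow_one] at hcc
      have hylt : y < w := lt_of_le_of_ne (Nat.le_of_dvd (by omega) hyw) hynw
      have hyq : (0:ℚ) < y := by
        have := hSpos y hyS; exact_mod_cast this
      have hwltq : (y:ℚ) < w := by exact_mod_cast hylt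
      have : 1 / (w:ℚ) < 1 / y := by
        apply one_div_lt_one_div_of_lt hyq hwltq
      linarith
  · -- t ≥ 2
    set Pow2 := C.powerset.filter (fun T => 2 ≤ T.card) with hPow2
    set V := Pow2.image (gT w) with hV
    have hgT_basic : ∀ T ∈ Pow2, T ⊆ C ∧ 2 ≤ T.card := by
      intro T hT
      simp only [hPow2, Finset.mem_filter, Finset.mem_powerset] at hT
      exact hT
    have hVS : V ⊆ S := by
      intro m hm
      simp only [hV, Finset.mem_image] at hm
      obtain ⟨T, hT, rfl⟩ := hm
      exact gT_mem S hg hwS ((hgT_basic T hT).1.trans hCS)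
    have hVw : ∀ m ∈ V, m ∣ w := by
      intro m hm
      simp only [hV, Finset.mem_image] at hm
      obtain ⟨T, _, rfl⟩ := hm
      exact gT_dvd_w w T
    have hVnotC : ∀ m ∈ V, m ∉ C := by
      intro m hm hmC
      simp only [hV, Finset.mem_image] at hm
      obtain ⟨T, hT, rfl⟩ := hm
      obtain ⟨hTC, hT2⟩ := hgT_basic T hT
      obtain ⟨u, hu, v, hv, huv⟩ := Finset.one_lt_card.mp (show 1 < T.card by omega)
      have hdu : gT w T ∣ u := gT_dvd w hu
      have hdv : gT w T ∣ v := gT_dvd w hv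
      have hequ : gT w T = u := by
        by_contra hne
        exact coat_not_dvd hmC (hTC hu) hne hdu
      have heqv : gT w T = v := by
        by_contra hne
        exact coat_not_dvd hmC (hTC hv) hne hdv
      exact huv (hequ ▸ heqv)
    have hVnw : ∀ m ∈ V, m ≠ w := by
      intro m hm hmw
      simp only [hV, Finset.mem_image] at hm
      obtain ⟨T, hT, heq⟩ := hm
      obtain ⟨hTC, hT2⟩ := hgT_basic T hT
      obtain ⟨u, hu⟩ := Finset.card_pos.mp (by omega : 0 < T.card)
      have hdu : gT w T ∣ u := gT_dvd w hu
      rw [heq, hmw] at hdu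
      obtain ⟨_, huw, hunw⟩ := hCmem u (hTC hu)
      exact hunw (Nat.dvd_antisymm huw hdu)
    have hV2y : ∀ m ∈ V, ∀ y ∈ C, m ∣ y → 2 * m ≤ y := by
      intro m hm y hy hdvd
      have hyS := (hCmem y hy).1
      apply two_mul_le_of_dvd hdvd
      · intro h; exact hVnotC m hm (h ▸ hy)
      · intro h; exact h0 (h ▸ hyS)
    set b := gT w C with hb
    have hbV : b ∈ V := by
      simp only [hV, Finset.mem_image]
      exact ⟨C, by simp [hPow2, ht2], rfl⟩
    have hbdvd : ∀ T ⊆ C, b ∣ gT w T := by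
      intro T hTC
      apply dvd_gT
      · intro y hy
        exact gT_dvd w (hTC hy)
      · exact gT_dvd_w w C
    have hbdvdV : ∀ m ∈ V, b ∣ m := by
      intro m hm
      simp only [hV, Finset.mem_image] at hm
      obtain ⟨T, hT, rfl⟩ := hm
      exact hbdvd T (hgT_basic T hT).1
    have hgs : ∀ y ∈ C, gT w {y} = y := by
      intro y hy
      simp [gT, Nat.gcd_eq_left (hCmem y hy).2.1]
    have hposS : ∀ m ∈ V, 1 ≤ m := fun m hm => hSpos m (hVS hm)
    have hgTV : ∀ T, T ⊆ C → 2 ≤ T.card → gT w T ∈ V := by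
      intro T h1 h2
      simp only [hV, Finset.mem_image]
      exact ⟨T, by simp [hPow2, Finset.mem_filter, Finset.mem_powerset, h1, h2], rfl⟩
    rcases Nat.lt_or_ge V.card 4 with hVlt | hV4
    · -- |V| ≤ 3 : contradiction via positivity
      exfalso
      set W := V.erase b with hW
      have hVeq : V = insert b W := (Finset.insert_erase hbV).symm
      have hWcard : W.card ≤ 2 := by
        rw [hW, Finset.card_erase_of_mem hbV]
        omega
      have hWV : W ⊆ V := Finset.erase_subset b V
      have hWnb : ∀ m ∈ W, m ≠ b := fun m hm => (Finset.mem_erase.mp hm).1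
      have hAc : ∀ m ∈ V, 2 ≤ (C.filter (fun y => m ∣ y)).card := by
        intro m hm
        simp only [hV, Finset.mem_image] at hm
        obtain ⟨T0, hT0, rfl⟩ := hm
        obtain ⟨hT0C, hT02⟩ := hgT_basic T0 hT0
        refine le_trans hT02 (Finset.card_le_card ?_)
        intro y hy
        exact Finset.mem_filter.mpr ⟨hT0C hy, gT_dvd w hy⟩
      have hmdg : ∀ m ∈ V, ∀ T, T ⊆ C.filter (fun y => m ∣ y) → m ∣ gT w T := by
        intro m hm T hsub
        exact dvd_gT (fun y hy => (Finset.mem_filter.mp (hsub hy)).2) (hVw m hm)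
      have hmb : ∀ m ∈ V, m ∣ b → m = b := fun m hm hd => Nat.dvd_antisymm hd (hbdvdV m hm)
      have hVmem : ∀ T, T ⊆ C → 2 ≤ T.card → gT w T = b ∨ gT w T ∈ W := by
        intro T h1 h2
        have := hgTV T h1 h2
        rw [hVeq] at this
        exact Finset.mem_insert.mp this
      have hTsubA : ∀ m, ∀ T, T ⊆ C → gT w T = m → T ⊆ C.filter (fun y => m ∣ y) := by
        intro m T hTC heq y hy
        exact Finset.mem_filter.mpr ⟨hTC hy, heq ▸ gT_dvd w hy⟩
      have hby : ∀ y ∈ C, 2 * b ≤ y := fun y hy => hV2y b hbV y hy (gT_dvd w hy)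
      have hb1 : 1 ≤ b := hposS b hbV
      interval_cases hWc : W.card
      · -- W empty : V = {b}
        have hWe : W = ∅ := Finset.card_eq_zero.mp hWc
        have hpos := pos_chain C (gT w) w b b b ∅ ∅ hw1 hb1 hb1 hb1 (gT_empty w) hgs ht2
          (Finset.empty_subset C) (Finset.Subset.refl ∅)
          (fun T _ h2 hsub => by
            rw [Finset.subset_empty.mp hsub] at h2; simp at h2)
          (fun T _ h2 hsub _ => by
            rw [Finset.subset_empty.mp hsub] at h2; simp at h2)
          (fun T h1 h2 _ => by
            rcases hVmem T h1 h2 with h | h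
            · exact h
            · rw [hWe] at h; exact absurd h (Finset.notMem_empty _))
          (Or.inl rfl) (Or.inl rfl)
          (fun y hy => absurd hy (Finset.notMem_empty _))
          (fun y hy => absurd hy (Finset.notMem_empty _))
          hby
        rw [hcc] at hpos
        exact lt_irrefl _ hpos
      · -- W = {m}
        obtain ⟨m, hWm⟩ := Finset.card_eq_one.mp hWc
        have hmV : m ∈ V := hWV (hWm ▸ Finset.mem_singleton_self m)
        have hmnb : m ≠ b := hWnb m (hWm ▸ Finset.mem_singleton_self m)
        have hm1 : 1 ≤ m := hposS m hmV
        set A := C.filter (fun y => m ∣ y) with hA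
        have hpos := pos_chain C (gT w) w b m b A ∅ hw1 hb1 hm1 hb1 (gT_empty w) hgs ht2
          (Finset.filter_subset _ _) (Finset.empty_subset A)
          (fun T _ h2 hsub => by
            rw [Finset.subset_empty.mp hsub] at h2; simp at h2)
          (fun T h1 h2 hsub _ => by
            rcases hVmem T h1 h2 with h | h
            · exfalso
              have := hmdg m hmV T hsub
              rw [h] at this
              exact hmnb (hmb m hmV this)
            · rw [hWm, Finset.mem_singleton] at h
              exact h)
          (fun T h1 h2 hns => by
            rcases hVmem T h1 h2 with h | h
            · exact h
            · exfalso
              rw [hWm, Finset.mem_singleton] at h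
              exact hns (hTsubA m T h1 h))
          (Or.inl rfl) (Or.inr (hAc m hmV))
          (fun y hy => absurd hy (Finset.notMem_empty _))
          (fun y hy => hV2y m hmV y (Finset.mem_filter.mp hy).1 (Finset.mem_filter.mp hy).2)
          hby
        rw [hcc] at hpos
        exact lt_irrefl _ hpos
      · -- W = {m1, m2}
        obtain ⟨m1, m2, hm12, hWm⟩ := Finset.card_eq_two.mp hWc
        have hm1V : m1 ∈ V := hWV (hWm ▸ by simp)
        have hm2V : m2 ∈ V := hWV (hWm ▸ by simp)
        have hm1nb : m1 ≠ b := hWnb m1 (hWm ▸ by simp)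
        have hm2nb : m2 ≠ b := hWnb m2 (hWm ▸ by simp)
        have hm1p : 1 ≤ m1 := hposS m1 hm1V
        have hm2p : 1 ≤ m2 := hposS m2 hm2V
        set A1 := C.filter (fun y => m1 ∣ y) with hA1
        set A2 := C.filter (fun y => m2 ∣ y) with hA2
        have hWmem : ∀ x ∈ W, x = m1 ∨ x = m2 := by
          intro x hx
          rw [hWm] at hx
          simpa using hx
        by_cases hd12 : m1 ∣ m2
        · -- chain m1 | m2 : m2 on top
          have hA21 : A2 ⊆ A1 := by
            intro y hy
            rw [hA2, Finset.mem_filter] at hy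
            exact Finset.mem_filter.mpr ⟨hy.1, hd12.trans hy.2⟩
          have hpos := pos_chain C (gT w) w b m1 m2 A1 A2 hw1 hb1 hm1p hm2p
            (gT_empty w) hgs ht2 (Finset.filter_subset _ _) hA21
            (fun T h1 h2 hsub => by
              have hdm2 : m2 ∣ gT w T := hmdg m2 hm2V T hsub
              rcases hVmem T h1 h2 with h | h
              · exfalso; rw [h] at hdm2; exact hm2nb (hmb m2 hm2V hdm2)
              · rcases hWmem _ h with h' | h'
                · exfalso
                  rw [h'] at hdm2
                  exact hm12 (Nat.dvd_antisymm hd12 hdm2)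
                · exact h')
            (fun T h1 h2 hsub hns => by
              have hdm1 : m1 ∣ gT w T := hmdg m1 hm1V T hsub
              rcases hVmem T h1 h2 with h | h
              · exfalso; rw [h] at hdm1; exact hm1nb (hmb m1 hm1V hdm1)
              · rcases hWmem _ h with h' | h'
                · exact h'
                · exfalso; exact hns (hTsubA m2 T h1 h'))
            (fun T h1 h2 hns => by
              rcases hVmem T h1 h2 with h | h
              · exact h
              · exfalso
                rcases hWmem _ h with h' | h'
                · exact hns (hTsubA m1 T h1 h')
                · exact hns ((hTsubA m2 T h1 h').trans hA21))
            (Or.inr (hAc m2 hm2V)) (Or.inr (hAc m1 hm1V))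
            (fun y hy => hV2y m2 hm2V y (Finset.mem_filter.mp hy).1 (Finset.mem_filter.mp hy).2)
            (fun y hy => hV2y m1 hm1V y (Finset.mem_filter.mp hy).1 (Finset.mem_filter.mp hy).2)
            hby
          rw [hcc] at hpos
          exact lt_irrefl _ hpos
        · by_cases hd21 : m2 ∣ m1
          · -- chain m2 | m1 : m1 on top
            have hA12 : A1 ⊆ A2 := by
              intro y hy
              rw [hA1, Finset.mem_filter] at hy
              exact Finset.mem_filter.mpr ⟨hy.1, hd21.trans hy.2⟩
            have hpos := pos_chain C (gT w) w b m2 m1 A2 A1 hw1 hb1 hm2p hm1p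
              (gT_empty w) hgs ht2 (Finset.filter_subset _ _) hA12
              (fun T h1 h2 hsub => by
                have hdm1 : m1 ∣ gT w T := hmdg m1 hm1V T hsub
                rcases hVmem T h1 h2 with h | h
                · exfalso; rw [h] at hdm1; exact hm1nb (hmb m1 hm1V hdm1)
                · rcases hWmem _ h with h' | h'
                  · exact h'
                  · exfalso
                    rw [h'] at hdm1
                    exact hm12 (Nat.dvd_antisymm hdm1 hd21))
              (fun T h1 h2 hsub hns => by
                have hdm2 : m2 ∣ gT w T := hmdg m2 hm2V T hsub
                rcases hVmem T h1 h2 with h | h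
                · exfalso; rw [h] at hdm2; exact hm2nb (hmb m2 hm2V hdm2)
                · rcases hWmem _ h with h' | h'
                  · exfalso; exact hns (hTsubA m1 T h1 h')
                  · exact h')
              (fun T h1 h2 hns => by
                rcases hVmem T h1 h2 with h | h
                · exact h
                · exfalso
                  rcases hWmem _ h with h' | h'
                  · exact hns ((hTsubA m1 T h1 h').trans hA12)
                  · exact hns (hTsubA m2 T h1 h'))
              (Or.inr (hAc m1 hm1V)) (Or.inr (hAc m2 hm2V))
              (fun y hy => hV2y m1 hm1V y (Finset.mem_filter.mp hy).1 (Finset.mem_filter.mp hy).2)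
              (fun y hy => hV2y m2 hm2V y (Finset.mem_filter.mp hy).1 (Finset.mem_filter.mp hy).2)
              hby
            rw [hcc] at hpos
            exact lt_irrefl _ hpos
          · -- antichain
            have hI : (A1 ∩ A2).card ≤ 1 := by
              by_contra hcon
              push_neg at hcon
              obtain ⟨u, hu, v, hv, huv⟩ := Finset.one_lt_card.mp hcon
              have huC : u ∈ C := (Finset.mem_filter.mp (Finset.mem_inter.mp hu).1).1
              have hvC : v ∈ C := (Finset.mem_filter.mp (Finset.mem_inter.mp hv).1).1
              have hm1u : m1 ∣ u := (Finset.mem_filter.mp (Finset.mem_inter.mp hu).1).2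
              have hm1v : m1 ∣ v := (Finset.mem_filter.mp (Finset.mem_inter.mp hv).1).2
              have hm2u : m2 ∣ u := (Finset.mem_filter.mp (Finset.mem_inter.mp hu).2).2
              have hm2v : m2 ∣ v := (Finset.mem_filter.mp (Finset.mem_inter.mp hv).2).2
              have hTC : ({u, v} : Finset ℕ) ⊆ C := by
                intro x hx
                rcases Finset.mem_insert.mp hx with rfl | hx
                · exact huC
                · exact (Finset.mem_singleton.mp hx) ▸ hvC
              have hT2 : 2 ≤ ({u, v} : Finset ℕ).card := by
                rw [Finset.card_insert_of_notMem (by simpa using huv), Finset.card_singleton]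
              have hdm1 : m1 ∣ gT w {u, v} := by
                apply dvd_gT _ (hVw m1 hm1V)
                intro x hx
                rcases Finset.mem_insert.mp hx with rfl | hx
                · exact hm1u
                · exact (Finset.mem_singleton.mp hx) ▸ hm1v
              have hdm2 : m2 ∣ gT w {u, v} := by
                apply dvd_gT _ (hVw m2 hm2V)
                intro x hx
                rcases Finset.mem_insert.mp hx with rfl | hx
                · exact hm2u
                · exact (Finset.mem_singleton.mp hx) ▸ hm2v
              rcases hVmem _ hTC hT2 with h | h
              · rw [h] at hdm1
                exact hm1nb (hmb m1 hm1V hdm1)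
              · rcases hWmem _ h with h' | h'
                · rw [h'] at hdm2; exact hd21 hdm2
                · rw [h'] at hdm1; exact hd12 hdm1
            have hpos := pos_anti C (gT w) w b m1 m2 A1 A2 hw1 hb1 hm1p hm2p
              (gT_empty w) hgs ht2 (Finset.filter_subset _ _) (Finset.filter_subset _ _)
              hI (hAc m1 hm1V) (hAc m2 hm2V)
              (fun T h1 h2 hsub => by
                have hdm1 : m1 ∣ gT w T := hmdg m1 hm1V T hsub
                rcases hVmem T h1 h2 with h | h
                · exfalso; rw [h] at hdm1; exact hm1nb (hmb m1 hm1V hdm1)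
                · rcases hWmem _ h with h' | h'
                  · exact h'
                  · exfalso; rw [h'] at hdm1; exact hd12 hdm1)
              (fun T h1 h2 hsub => by
                have hdm2 : m2 ∣ gT w T := hmdg m2 hm2V T hsub
                rcases hVmem T h1 h2 with h | h
                · exfalso; rw [h] at hdm2; exact hm2nb (hmb m2 hm2V hdm2)
                · rcases hWmem _ h with h' | h'
                  · exfalso; rw [h'] at hdm2; exact hd21 hdm2
                  · exact h')
              (fun T h1 h2 hn1 hn2 => by
                rcases hVmem T h1 h2 with h | h
                · exact h
                · exfalso
                  rcases hWmem _ h with h' | h'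
                  · exact hn1 (hTsubA m1 T h1 h')
                  · exact hn2 (hTsubA m2 T h1 h'))
              (fun y hy => hV2y m1 hm1V y (Finset.mem_filter.mp hy).1 (Finset.mem_filter.mp hy).2)
              (fun y hy => hV2y m2 hm2V y (Finset.mem_filter.mp hy).1 (Finset.mem_filter.mp hy).2)
              hby
            rw [hcc] at hpos
            exact lt_irrefl _ hpos
    · -- |V| ≥ 4 : cube case
      have hwC : w ∉ C := fun h => (hCmem w h).2.2 rfl
      have hwCV : w ∉ C ∪ V := by
        intro h
        rcases Finset.mem_union.mp h with h | h
        · exact hwC h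
        · exact hVnw w h rfl
      have hdisj : Disjoint C V := Finset.disjoint_left.mpr (fun a haC haV => hVnotC a haV haC)
      have hcount : 1 + C.card + V.card ≤ 8 := by
        have hsub : insert w (C ∪ V) ⊆ S := by
          intro x hx
          rcases Finset.mem_insert.mp hx with rfl | hx
          · exact hwS
          · rcases Finset.mem_union.mp hx with h | h
            · exact hCS h
            · exact hVS h
        have hle := Finset.card_le_card hsub
        rw [hcard, Finset.card_insert_of_notMem hwCV, Finset.card_union_of_disjoint hdisj] at hle
        omega
      have ht3 : C.card = 3 := by
        by_contra hne3
        have ht2' : C.card = 2 := by omega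
        have hVb : V ⊆ {b} := by
          intro m hm
          simp only [hV, Finset.mem_image] at hm
          obtain ⟨T, hT, rfl⟩ := hm
          obtain ⟨hTC, hT2⟩ := hgT_basic T hT
          have hTeq : T = C := Finset.eq_of_subset_of_card_le hTC (by omega)
          rw [hTeq, Finset.mem_singleton, hb]
        have := Finset.card_le_card hVb
        simp at this
        omega
      obtain ⟨y1, y2, y3, hne12, hne13, hne23, hCeq⟩ := Finset.card_eq_three.mp ht3
      have hy1C : y1 ∈ C := by rw [hCeq]; simp
      have hy2C : y2 ∈ C := by rw [hCeq]; simp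
      have hy3C : y3 ∈ C := by rw [hCeq]; simp
      have hmemC : ∀ x ∈ C, x = y1 ∨ x = y2 ∨ x = y3 := by
        intro x hx
        rw [hCeq] at hx
        simpa using hx
      have hp12C : ({y1, y2} : Finset ℕ) ⊆ C := by
        intro x hx
        rcases Finset.mem_insert.mp hx with rfl | hx
        · exact hy1C
        · exact (Finset.mem_singleton.mp hx) ▸ hy2C
      have hp13C : ({y1, y3} : Finset ℕ) ⊆ C := by
        intro x hx
        rcases Finset.mem_insert.mp hx with rfl | hx
        · exact hy1C
        · exact (Finset.mem_singleton.mp hx) ▸ hy3C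
      have hp23C : ({y2, y3} : Finset ℕ) ⊆ C := by
        intro x hx
        rcases Finset.mem_insert.mp hx with rfl | hx
        · exact hy2C
        · exact (Finset.mem_singleton.mp hx) ▸ hy3C
      set g12 := gT w {y1, y2} with hg12
      set g13 := gT w {y1, y3} with hg13
      set g23 := gT w {y2, y3} with hg23
      have hg12V : g12 ∈ V := hgTV _ hp12C (by rw [Finset.card_pair hne12])
      have hg13V : g13 ∈ V := hgTV _ hp13C (by rw [Finset.card_pair hne13])
      have hg23V : g23 ∈ V := hgTV _ hp23C (by rw [Finset.card_pair hne23])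
      have hsub3 : ∀ T, T ⊆ C → 2 ≤ T.card →
          T = {y1, y2} ∨ T = {y1, y3} ∨ T = {y2, y3} ∨ T = C := by
        intro T hTC hT2
        have hle3 : T.card ≤ 3 := le_trans (Finset.card_le_card hTC) (le_of_eq ht3)
        rcases Nat.eq_or_lt_of_le hT2 with h2 | h2
        · -- card = 2
          obtain ⟨u, v, huv, rfl⟩ := Finset.card_eq_two.mp h2.symm
          have hu := hmemC u (hTC (by simp))
          have hv := hmemC v (hTC (by simp))
          rcases pair_sub3 hu hv huv with h | h | h
          · exact Or.inl h
          · exact Or.inr (Or.inl h)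
          · exact Or.inr (Or.inr (Or.inl h))
        · -- card = 3
          have : T.card = 3 := by omega
          exact Or.inr (Or.inr (Or.inr
            (Finset.eq_of_subset_of_card_le hTC (by omega))))
      have hVsub : V ⊆ {g12, g13, g23, b} := by
        intro m hm
        simp only [hV, Finset.mem_image] at hm
        obtain ⟨T, hT, rfl⟩ := hm
        obtain ⟨hTC, hT2⟩ := hgT_basic T hT
        rcases hsub3 T hTC hT2 with rfl | rfl | rfl | rfl <;>
          simp [hg12, hg13, hg23, hb]
      -- distinctness of the four meets
      have hL4 : 4 ≤ ({g12, g13, g23, b} : Finset ℕ).card :=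
        le_trans hV4 (Finset.card_le_card hVsub)
      have hnm1 : g12 ∉ ({g13, g23, b} : Finset ℕ) := by
        intro hmem
        have : ({g12, g13, g23, b} : Finset ℕ) = {g13, g23, b} := Finset.insert_eq_self.mpr hmem
        rw [this] at hL4
        have := card3_le g13 g23 b
        omega
      have hc3' : ({g13, g23, b} : Finset ℕ).card = 3 := by
        have h1 : ({g12, g13, g23, b} : Finset ℕ).card = ({g13, g23, b} : Finset ℕ).card + 1 := by
          rw [Finset.card_insert_of_notMem hnm1]
        have h2 := card3_le g13 g23 b
        have h3 : ({g12, g13, g23, b} : Finset ℕ).card ≤ 4 := by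
          rw [h1]; omega
        omega
      have hnm2 : g13 ∉ ({g23, b} : Finset ℕ) := by
        intro hmem
        have : ({g13, g23, b} : Finset ℕ) = {g23, b} := Finset.insert_eq_self.mpr hmem
        rw [this] at hc3'
        have := Finset.card_insert_le g23 ({b} : Finset ℕ)
        simp at this
        omega
      have hnm3 : g23 ≠ b := by
        intro hmem
        rw [hmem] at hc3'
        simp at hc3'
        have := Finset.card_insert_le g13 ({b} : Finset ℕ)
        simp at this
        omega
      have hne_1213 : g12 ≠ g13 := by intro h; exact hnm1 (by simp [h])
      have hne_1223 : g12 ≠ g23 := by intro h; exact hnm1 (by simp [h])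
      have hne_12b : g12 ≠ b := by intro h; exact hnm1 (by simp [h])
      have hne_1323 : g13 ≠ g23 := by intro h; exact hnm2 (by simp [h])
      have hne_13b : g13 ≠ b := by intro h; exact hnm2 (by simp [h])
      have hne_23b : g23 ≠ b := hnm3
      -- basic ne facts
      have hy1nw : y1 ≠ w := (hCmem y1 hy1C).2.2
      have hy2nw : y2 ≠ w := (hCmem y2 hy2C).2.2
      have hy3nw : y3 ≠ w := (hCmem y3 hy3C).2.2
      have hg12nw : g12 ≠ w := hVnw g12 hg12V
      have hg13nw : g13 ≠ w := hVnw g13 hg13V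
      have hg23nw : g23 ≠ w := hVnw g23 hg23V
      have hbnw : b ≠ w := hVnw b hbV
      have hg12ny1 : g12 ≠ y1 := fun h => hVnotC g12 hg12V (by rw [h]; exact hy1C)
      have hg12ny2 : g12 ≠ y2 := fun h => hVnotC g12 hg12V (by rw [h]; exact hy2C)
      have hg12ny3 : g12 ≠ y3 := fun h => hVnotC g12 hg12V (by rw [h]; exact hy3C)
      have hg13ny1 : g13 ≠ y1 := fun h => hVnotC g13 hg13V (by rw [h]; exact hy1C)
      have hg13ny2 : g13 ≠ y2 := fun h => hVnotC g13 hg13V (by rw [h]; exact hy2C)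
      have hg13ny3 : g13 ≠ y3 := fun h => hVnotC g13 hg13V (by rw [h]; exact hy3C)
      have hg23ny1 : g23 ≠ y1 := fun h => hVnotC g23 hg23V (by rw [h]; exact hy1C)
      have hg23ny2 : g23 ≠ y2 := fun h => hVnotC g23 hg23V (by rw [h]; exact hy2C)
      have hg23ny3 : g23 ≠ y3 := fun h => hVnotC g23 hg23V (by rw [h]; exact hy3C)
      have hbny1 : b ≠ y1 := fun h => hVnotC b hbV (by rw [h]; exact hy1C)
      have hbny2 : b ≠ y2 := fun h => hVnotC b hbV (by rw [h]; exact hy2C)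
      have hbny3 : b ≠ y3 := fun h => hVnotC b hbV (by rw [h]; exact hy3C)
      -- S is exactly the eight elements
      set E : Finset ℕ := {w, y1, y2, y3, g12, g13, g23, b} with hE
      have hES : E ⊆ S := by
        intro x hx
        simp only [hE, Finset.mem_insert, Finset.mem_singleton] at hx
        rcases hx with rfl | rfl | rfl | rfl | rfl | rfl | rfl | rfl
        · exact hwS
        · exact hCS hy1C
        · exact hCS hy2C
        · exact hCS hy3C
        · exact hVS hg12V
        · exact hVS hg13V
        · exact hVS hg23V
        · exact hVS hbV
      have hcardE : E.card = 8 := by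
        rw [hE]
        rw [Finset.card_insert_of_notMem (by
          simp [hy1nw.symm, hy2nw.symm, hy3nw.symm, hg12nw.symm, hg13nw.symm, hg23nw.symm,
            hbnw.symm])]
        rw [Finset.card_insert_of_notMem (by
          simp [hne12, hne13, hg12ny1.symm, hg13ny1.symm, hg23ny1.symm, hbny1.symm])]
        rw [Finset.card_insert_of_notMem (by
          simp [hne23, hg12ny2.symm, hg13ny2.symm, hg23ny2.symm, hbny2.symm])]
        rw [Finset.card_insert_of_notMem (by
          simp [hg12ny3.symm, hg13ny3.symm, hg23ny3.symm, hbny3.symm])]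
        rw [Finset.card_insert_of_notMem (by simp [hne_1213, hne_1223, hne_12b])]
        rw [Finset.card_insert_of_notMem (by simp [hne_1323, hne_13b])]
        rw [Finset.card_insert_of_notMem (by simp [hne_23b])]
        rfl
      have hSE : S = E := (Finset.eq_of_subset_of_card_le hES (by rw [hcard, hcardE])).symm
      have hmemS : ∀ x ∈ S, x = w ∨ x = y1 ∨ x = y2 ∨ x = y3 ∨ x = g12 ∨ x = g13 ∨
          x = g23 ∨ x = b := by
        intro x hx
        rw [hSE] at hx
        simpa [hE] using hx
      -- divisibility facts
      have hy1w : y1 ∣ w := (hCmem y1 hy1C).2.1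
      have hy2w : y2 ∣ w := (hCmem y2 hy2C).2.1
      have hy3w : y3 ∣ w := (hCmem y3 hy3C).2.1
      have hg12w : g12 ∣ w := gT_dvd_w w {y1, y2}
      have hg13w : g13 ∣ w := gT_dvd_w w {y1, y3}
      have hg23w : g23 ∣ w := gT_dvd_w w {y2, y3}
      have hbw : b ∣ w := gT_dvd_w w C
      have hd121 : g12 ∣ y1 := gT_dvd w (by simp)
      have hd122 : g12 ∣ y2 := gT_dvd w (by simp)
      have hd131 : g13 ∣ y1 := gT_dvd w (by simp)
      have hd133 : g13 ∣ y3 := gT_dvd w (by simp)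
      have hd232 : g23 ∣ y2 := gT_dvd w (by simp)
      have hd233 : g23 ∣ y3 := gT_dvd w (by simp)
      have hdb1 : b ∣ y1 := gT_dvd w hy1C
      have hdb2 : b ∣ y2 := gT_dvd w hy2C
      have hdb3 : b ∣ y3 := gT_dvd w hy3C
      have hdb12 : b ∣ g12 := hbdvd _ hp12C
      have hdb13 : b ∣ g13 := hbdvd _ hp13C
      have hdb23 : b ∣ g23 := hbdvd _ hp23C
      -- negative divisibility facts
      have hny12 : ¬ y1 ∣ y2 := coat_not_dvd hy1C hy2C hne12
      have hny13 : ¬ y1 ∣ y3 := coat_not_dvd hy1C hy3C hne13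
      have hny21 : ¬ y2 ∣ y1 := coat_not_dvd hy2C hy1C hne12.symm
      have hny23 : ¬ y2 ∣ y3 := coat_not_dvd hy2C hy3C hne23
      have hny31 : ¬ y3 ∣ y1 := coat_not_dvd hy3C hy1C hne13.symm
      have hny32 : ¬ y3 ∣ y2 := coat_not_dvd hy3C hy2C hne23.symm
      have hnwy1 : ¬ w ∣ y1 := fun h => hy1nw (Nat.dvd_antisymm hy1w h)
      have hnwy2 : ¬ w ∣ y2 := fun h => hy2nw (Nat.dvd_antisymm hy2w h)
      have hnwy3 : ¬ w ∣ y3 := fun h => hy3nw (Nat.dvd_antisymm hy3w h)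
      have hnwg12 : ¬ w ∣ g12 := fun h => hg12nw (Nat.dvd_antisymm hg12w h)
      have hnwg13 : ¬ w ∣ g13 := fun h => hg13nw (Nat.dvd_antisymm hg13w h)
      have hnwg23 : ¬ w ∣ g23 := fun h => hg23nw (Nat.dvd_antisymm hg23w h)
      have hnwb : ¬ w ∣ b := fun h => hbnw (Nat.dvd_antisymm hbw h)
      have hny1g12 : ¬ y1 ∣ g12 := fun h =>
        hVnotC g12 hg12V (by rw [← Nat.dvd_antisymm h hd121]; exact hy1C)
      have hny1g13 : ¬ y1 ∣ g13 := fun h =>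
        hVnotC g13 hg13V (by rw [← Nat.dvd_antisymm h hd131]; exact hy1C)
      have hny1g23 : ¬ y1 ∣ g23 := fun h => hny12 (h.trans hd232)
      have hny1b : ¬ y1 ∣ b := fun h => hny12 (h.trans hdb2)
      have hny2g12 : ¬ y2 ∣ g12 := fun h =>
        hVnotC g12 hg12V (by rw [← Nat.dvd_antisymm h hd122]; exact hy2C)
      have hny2g13 : ¬ y2 ∣ g13 := fun h => hny21 (h.trans hd131)
      have hny2g23 : ¬ y2 ∣ g23 := fun h =>
        hVnotC g23 hg23V (by rw [← Nat.dvd_antisymm h hd232]; exact hy2C)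
      have hny2b : ¬ y2 ∣ b := fun h => hny21 (h.trans hdb1)
      have hny3g12 : ¬ y3 ∣ g12 := fun h => hny31 (h.trans hd121)
      have hny3g13 : ¬ y3 ∣ g13 := fun h =>
        hVnotC g13 hg13V (by rw [← Nat.dvd_antisymm h hd133]; exact hy3C)
      have hny3g23 : ¬ y3 ∣ g23 := fun h =>
        hVnotC g23 hg23V (by rw [← Nat.dvd_antisymm h hd233]; exact hy3C)
      have hny3b : ¬ y3 ∣ b := fun h => hny31 (h.trans hdb1)
      have hng12y3 : ¬ g12 ∣ y3 := by
        intro h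
        have hdvdb : g12 ∣ b := by
          rw [hb]
          apply dvd_gT _ hg12w
          intro y hy
          rcases hmemC y hy with rfl | rfl | rfl
          exacts [hd121, hd122, h]
        exact hne_12b (Nat.dvd_antisymm hdvdb hdb12)
      have hng13y2 : ¬ g13 ∣ y2 := by
        intro h
        have hdvdb : g13 ∣ b := by
          rw [hb]
          apply dvd_gT _ hg13w
          intro y hy
          rcases hmemC y hy with rfl | rfl | rfl
          exacts [hd131, h, hd133]
        exact hne_13b (Nat.dvd_antisymm hdvdb hdb13)
      have hng23y1 : ¬ g23 ∣ y1 := by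
        intro h
        have hdvdb : g23 ∣ b := by
          rw [hb]
          apply dvd_gT _ hg23w
          intro y hy
          rcases hmemC y hy with rfl | rfl | rfl
          exacts [h, hd232, hd233]
        exact hne_23b (Nat.dvd_antisymm hdvdb hdb23)
      have hng12g13 : ¬ g12 ∣ g13 := fun h => hng12y3 (h.trans hd133)
      have hng12g23 : ¬ g12 ∣ g23 := fun h => hng12y3 (h.trans hd233)
      have hng12b : ¬ g12 ∣ b := fun h => hne_12b (Nat.dvd_antisymm h hdb12)
      have hng13g12 : ¬ g13 ∣ g12 := fun h => hng13y2 (h.trans hd122)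
      have hng13g23 : ¬ g13 ∣ g23 := fun h => hng13y2 (h.trans hd232)
      have hng13b : ¬ g13 ∣ b := fun h => hne_13b (Nat.dvd_antisymm h hdb13)
      have hng23g12 : ¬ g23 ∣ g12 := fun h => hng23y1 (h.trans hd121)
      have hng23g13 : ¬ g23 ∣ g13 := fun h => hng23y1 (h.trans hd131)
      have hng23b : ¬ g23 ∣ b := fun h => hne_23b (Nat.dvd_antisymm h hdb23)
      -- the isomorphism
      set F : ℕ → Finset (Fin 3) := fun x =>
        if x = w then Finset.univ else if x = y1 then {0, 1} else if x = y2 then {0, 2}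
        else if x = y3 then {1, 2} else if x = g12 then {0} else if x = g13 then {1}
        else if x = g23 then {2} else ∅ with hF
      have Fw : F w = Finset.univ := by simp [hF]
      have Fy1 : F y1 = {0, 1} := by simp [hF, hy1nw]
      have Fy2 : F y2 = {0, 2} := by simp [hF, hy2nw, hne12.symm]
      have Fy3 : F y3 = {1, 2} := by simp [hF, hy3nw, hne13.symm, hne23.symm]
      have Fg12 : F g12 = {0} := by simp [hF, hg12nw, hg12ny1, hg12ny2, hg12ny3]
      have Fg13 : F g13 = {1} := by
        simp [hF, hg13nw, hg13ny1, hg13ny2, hg13ny3, hne_1213.symm]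
      have Fg23 : F g23 = {2} := by
        simp [hF, hg23nw, hg23ny1, hg23ny2, hg23ny3, hne_1223.symm, hne_1323.symm]
      have Fb : F b = ∅ := by
        simp [hF, hbnw, hbny1, hbny2, hbny3, hne_12b.symm, hne_13b.symm, hne_23b.symm]
      refine ⟨fun a => F a.1, ?_, ?_⟩
      · rw [Fintype.bijective_iff_injective_and_card]
        constructor
        · intro a a' hab
          have hab' : F a.1 = F a'.1 := hab
          rcases hmemS a.1 a.2 with ha | ha | ha | ha | ha | ha | ha | ha <;>
            rcases hmemS a'.1 a'.2 with hb2 | hb2 | hb2 | hb2 | hb2 | hb2 | hb2 | hb2 <;>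
            rw [ha, hb2] at hab' <;>
            simp only [Fw, Fy1, Fy2, Fy3, Fg12, Fg13, Fg23, Fb] at hab' <;>
            first
              | exact Subtype.ext (ha.trans hb2.symm)
              | exact absurd hab' (by decide)
        · simp [Fintype.card_coe, hcard, Fintype.card_finset]
      · intro a a'
        show a.1 ∣ a'.1 ↔ F a.1 ⊆ F a'.1
        rcases hmemS a.1 a.2 with ha | ha | ha | ha | ha | ha | ha | ha <;>
          rcases hmemS a'.1 a'.2 with hb2 | hb2 | hb2 | hb2 | hb2 | hb2 | hb2 | hb2 <;>
          rw [ha, hb2] <;>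
          simp only [Fw, Fy1, Fy2, Fy3, Fg12, Fg13, Fg23, Fb] <;>
          first
            | exact iff_of_true dvd_rfl (by decide)
            | exact iff_of_true (by assumption) (by decide)
            | exact iff_of_false (by assumption) (by decide)
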